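/- For any finite simple graphs G1 = (V1, E1) and G2 = (V2, E2) on disjoint vertex sets, the star chromatic number of their join satisfies χ_s(G1 ⋈ G2) = min{χ_s(G1) + |V2|, χ_s(G2) + |V1|}. -/

import Mathlib

open SimpleGraph

/-- A proper vertex coloring: adjacent vertices receive distinct colors. -/
def IsProperColoring {V α : Type*} (G : SimpleGraph V) (φ : V → α) : Prop :=
  ∀ ⦃u v : V⦄, G.Adj u v → φ u ≠ φ v

/-- An acyclic coloring: a proper coloring such that the subgraph induced by the
union of any two color classes contains no cycle. -/
def IsAcyclicColoring {V α : Type*} (G : SimpleGraph V) (φ : V → α) : Prop :=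
  IsProperColoring G φ ∧
    ∀ c₁ c₂ : α, (G.induce {v | φ v = c₁ ∨ φ v = c₂}).IsAcyclic

/-- A graph contains a path on four (distinct) vertices `a-b-c-d`,
not necessarily induced. -/
def HasP4 {V : Type*} (G : SimpleGraph V) : Prop :=
  ∃ a b c d : V, a ≠ b ∧ a ≠ c ∧ a ≠ d ∧ b ≠ c ∧ b ≠ d ∧ c ≠ d ∧
    G.Adj a b ∧ G.Adj b c ∧ G.Adj c d

/-- A star coloring: a proper coloring such that the subgraph induced by the
union of any two color classes contains no path on four vertices. -/
def IsStarColoring {V α : Type*} (G : SimpleGraph V) (φ : V → α) : Prop :=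
  IsProperColoring G φ ∧
    ∀ c₁ c₂ : α, ¬ HasP4 (G.induce {v | φ v = c₁ ∨ φ v = c₂})

/-- A cograph: a graph with no induced path on four vertices. -/
def IsCograph {V : Type*} (G : SimpleGraph V) : Prop :=
  ¬ ∃ a b c d : V, a ≠ b ∧ a ≠ c ∧ a ≠ d ∧ b ≠ c ∧ b ≠ d ∧ c ≠ d ∧
    G.Adj a b ∧ G.Adj b c ∧ G.Adj c d ∧
    ¬ G.Adj a c ∧ ¬ G.Adj a d ∧ ¬ G.Adj b d

/-- The acyclic chromatic number: the least number of colors in an acyclic coloring. -/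
noncomputable def acyclicChromaticNumber {V : Type*} (G : SimpleGraph V) : ℕ :=
  sInf {n : ℕ | ∃ φ : V → Fin n, IsAcyclicColoring G φ}

/-- The star chromatic number: the least number of colors in a star coloring. -/
noncomputable def starChromaticNumber {V : Type*} (G : SimpleGraph V) : ℕ :=
  sInf {n : ℕ | ∃ φ : V → Fin n, IsStarColoring G φ}

/-- A cycle is induced if the only edges of the graph among its vertices
are the edges of the cycle. -/
def SimpleGraph.Walk.IsInducedCycle {V : Type*} {G : SimpleGraph V} {v : V}
    (p : G.Walk v v) : Prop :=
  p.IsCycle ∧ ∀ u w : V, u ∈ p.support → w ∈ p.support → G.Adj u w → s(u, w) ∈ p.edges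

/-- A graph is chordal if it has no induced cycle on four or more vertices. -/
def IsChordal {V : Type*} (G : SimpleGraph V) : Prop :=
  ∀ (v : V) (p : G.Walk v v), p.IsInducedCycle → p.length ≤ 3

/-- The treewidth of `G`: the minimum of `ω(G⁺) - 1` over all triangulations
(chordal supergraphs on the same vertex set) `G⁺` of `G`. -/
noncomputable def treewidth {V : Type*} (G : SimpleGraph V) : ℕ :=
  sInf {k : ℕ | ∃ H : SimpleGraph V, G ≤ H ∧ IsChordal H ∧ k = H.cliqueNum - 1}

/-- An interval graph: vertices can be mapped to real closed intervals so that
two distinct vertices are adjacent iff their intervals intersect. -/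
def IsIntervalGraph {V : Type*} (G : SimpleGraph V) : Prop :=
  ∃ f : V → ℝ × ℝ, ∀ u v : V, u ≠ v →
    (G.Adj u v ↔ (Set.Icc (f u).1 (f u).2 ∩ Set.Icc (f v).1 (f v).2).Nonempty)

/-- The pathwidth of `G`: the minimum of `ω(G⁺) - 1` over all intervalizations
(interval supergraphs on the same vertex set) `G⁺` of `G`. -/
noncomputable def pathwidth {V : Type*} (G : SimpleGraph V) : ℕ :=
  sInf {k : ℕ | ∃ H : SimpleGraph V, G ≤ H ∧ IsIntervalGraph H ∧ k = H.cliqueNum - 1}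

/-- The join of two graphs on disjoint vertex sets: their disjoint union together
with all edges between the two sides. -/
def SimpleGraph.join {V₁ V₂ : Type*} (G₁ : SimpleGraph V₁) (G₂ : SimpleGraph V₂) :
    SimpleGraph (V₁ ⊕ V₂) where
  Adj x y :=
    match x, y with
    | Sum.inl a, Sum.inl b => G₁.Adj a b
    | Sum.inr a, Sum.inr b => G₂.Adj a b
    | Sum.inl _, Sum.inr _ => True
    | Sum.inr _, Sum.inl _ => True
  symm := ⟨by rintro (a | a) (b | b) h <;> simp_all <;> exact h.symm⟩
  loopless := ⟨by rintro (a | a) h <;> simp_all⟩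


section Aux

variable {V V₁ V₂ W α β : Type*}

lemma mem_pair_of {a b x c₁ c₂ : α} (hab : a ≠ b) (ha : a = c₁ ∨ a = c₂)
    (hb : b = c₁ ∨ b = c₂) (hx : x = c₁ ∨ x = c₂) : x = a ∨ x = b := by
  rcases ha with rfl | rfl <;> rcases hb with rfl | rfl <;> tauto

lemma three_distinct {x y z c₁ c₂ : α} (hxy : x ≠ y) (hxz : x ≠ z) (hyz : y ≠ z)
    (hx : x = c₁ ∨ x = c₂) (hy : y = c₁ ∨ y = c₂) (hz : z = c₁ ∨ z = c₂) : False := by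
  rcases hx with rfl | rfl <;> rcases hy with rfl | rfl <;> rcases hz with rfl | rfl <;> tauto

lemma injective_isStarColoring {G : SimpleGraph V} {φ : V → α}
    (hφ : Function.Injective φ) : IsStarColoring G φ := by
  refine ⟨fun u v huv h => huv.ne (hφ h), ?_⟩
  rintro c₁ c₂ ⟨a, b, c, d, hab, hac, had, hbc, hbd, hcd, -, -, -⟩
  exact three_distinct (x := φ a.1) (y := φ b.1) (z := φ c.1)
    (fun h => hab (Subtype.ext (hφ h))) (fun h => hac (Subtype.ext (hφ h)))
    (fun h => hbc (Subtype.ext (hφ h))) a.2 b.2 c.2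

lemma isStarColoring_comp_right {H : SimpleGraph W} {G : SimpleGraph V}
    {f : W → V} (hf : Function.Injective f)
    (hadj : ∀ u v, H.Adj u v → G.Adj (f u) (f v))
    {φ : V → α} (hφ : IsStarColoring G φ) : IsStarColoring H (φ ∘ f) := by
  refine ⟨fun u v huv h => hφ.1 (hadj _ _ huv) h, ?_⟩
  rintro c₁ c₂ ⟨a, b, c, d, hab, hac, had, hbc, hbd, hcd, h1, h2, h3⟩
  refine hφ.2 c₁ c₂ ⟨⟨f a.1, a.2⟩, ⟨f b.1, b.2⟩, ⟨f c.1, c.2⟩, ⟨f d.1, d.2⟩,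
    ?_, ?_, ?_, ?_, ?_, ?_, hadj _ _ h1, hadj _ _ h2, hadj _ _ h3⟩
  · exact fun h => hab (Subtype.ext (hf (congrArg Subtype.val h)))
  · exact fun h => hac (Subtype.ext (hf (congrArg Subtype.val h)))
  · exact fun h => had (Subtype.ext (hf (congrArg Subtype.val h)))
  · exact fun h => hbc (Subtype.ext (hf (congrArg Subtype.val h)))
  · exact fun h => hbd (Subtype.ext (hf (congrArg Subtype.val h)))
  · exact fun h => hcd (Subtype.ext (hf (congrArg Subtype.val h)))

lemma isStarColoring_comp_left {G : SimpleGraph V} {φ : V → α}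
    (hφ : IsStarColoring G φ) {g : α → β} (hg : Set.InjOn g (Set.range φ)) :
    IsStarColoring G (g ∘ φ) := by
  refine ⟨fun u v huv h => hφ.1 huv (hg ⟨u, rfl⟩ ⟨v, rfl⟩ h), ?_⟩
  rintro c₁ c₂ ⟨a, b, c, d, hab, hac, had, hbc, hbd, hcd, h1, h2, h3⟩
  have hab' : g (φ a.1) ≠ g (φ b.1) := fun h => hφ.1 h1 (hg ⟨_, rfl⟩ ⟨_, rfl⟩ h)
  have hmem : ∀ x : {v | g (φ v) = c₁ ∨ g (φ v) = c₂}, φ x.1 = φ a.1 ∨ φ x.1 = φ b.1 := by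
    intro x
    rcases mem_pair_of hab' a.2 b.2 x.2 with h | h
    · exact Or.inl (hg ⟨_, rfl⟩ ⟨_, rfl⟩ h)
    · exact Or.inr (hg ⟨_, rfl⟩ ⟨_, rfl⟩ h)
  refine hφ.2 (φ a.1) (φ b.1) ⟨⟨a.1, hmem a⟩, ⟨b.1, hmem b⟩, ⟨c.1, hmem c⟩, ⟨d.1, hmem d⟩,
    ?_, ?_, ?_, ?_, ?_, ?_, h1, h2, h3⟩
  · exact fun h => hab (Subtype.ext (Subtype.mk_eq_mk.mp h))
  · exact fun h => hac (Subtype.ext (Subtype.mk_eq_mk.mp h))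
  · exact fun h => had (Subtype.ext (Subtype.mk_eq_mk.mp h))
  · exact fun h => hbc (Subtype.ext (Subtype.mk_eq_mk.mp h))
  · exact fun h => hbd (Subtype.ext (Subtype.mk_eq_mk.mp h))
  · exact fun h => hcd (Subtype.ext (Subtype.mk_eq_mk.mp h))

end Aux
section Aux2

variable {V V₁ V₂ : Type*}

lemma join_upper [Fintype V₂] (G₁ : SimpleGraph V₁) (G₂ : SimpleGraph V₂)
    {n : ℕ} (φ : V₁ → Fin n) (hφ : IsStarColoring G₁ φ) :
    ∃ Φ : V₁ ⊕ V₂ → Fin (n + Fintype.card V₂), IsStarColoring (G₁.join G₂) Φ := by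
  classical
  set m := Fintype.card V₂ with hm
  let e := Fintype.equivFin V₂
  refine ⟨Sum.elim (fun a => Fin.castAdd m (φ a)) (fun b => Fin.natAdd n (e b)), ?_, ?_⟩
  · rintro (u | u) (v | v) h heq
    · exact hφ.1 h (Fin.ext (by simpa using congrArg Fin.val heq))
    · have := congrArg Fin.val heq
      simp only [Sum.elim_inl, Sum.elim_inr, Fin.coe_castAdd, Fin.coe_natAdd] at this
      omega
    · have := congrArg Fin.val heq
      simp only [Sum.elim_inl, Sum.elim_inr, Fin.coe_castAdd, Fin.coe_natAdd] at this
      omega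
    · have h2 : e u = e v := Fin.ext (by
        have := congrArg Fin.val heq
        simp only [Sum.elim_inr, Fin.coe_natAdd] at this
        omega)
      exact (show G₂.Adj u v from h).ne (e.injective h2)
  · rintro c₁ c₂ ⟨⟨a, ha⟩, ⟨b, hb⟩, ⟨c, hc⟩, ⟨d, hd⟩, hab, hac, had, hbc, hbd, hcd, h1, h2, h3⟩
    have hab' : a ≠ b := fun h => hab (Subtype.ext h)
    have hac' : a ≠ c := fun h => hac (Subtype.ext h)
    have had' : a ≠ d := fun h => had (Subtype.ext h)
    have hbc' : b ≠ c := fun h => hbc (Subtype.ext h)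
    have hbd' : b ≠ d := fun h => hbd (Subtype.ext h)
    have hcd' : c ≠ d := fun h => hcd (Subtype.ext h)
    clear hab hac had hbc hbd hcd
    -- key lemmas
    have key1 : ∀ x y : V₂, (Sum.inr x : V₁ ⊕ V₂) ≠ Sum.inr y →
        (Fin.natAdd n (e x) = c₁ ∨ Fin.natAdd n (e x) = c₂) →
        (Fin.natAdd n (e y) = c₁ ∨ Fin.natAdd n (e y) = c₂) →
        ∀ z : V₁, ¬ (Fin.castAdd m (φ z) = c₁ ∨ Fin.castAdd m (φ z) = c₂) := by
      intro x y hxy hx hy z hz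
      have hexy : (e x : ℕ) ≠ (e y : ℕ) :=
        fun h => hxy (congrArg Sum.inr (e.injective (Fin.ext h)))
      have hlt := (φ z).isLt
      simp only [Fin.ext_iff, Fin.coe_castAdd, Fin.coe_natAdd] at hx hy hz
      omega
    have key2 : ∀ x y z : V₂, (Sum.inr x : V₁ ⊕ V₂) ≠ Sum.inr y →
        (Sum.inr x : V₁ ⊕ V₂) ≠ Sum.inr z → (Sum.inr y : V₁ ⊕ V₂) ≠ Sum.inr z →
        (Fin.natAdd n (e x) = c₁ ∨ Fin.natAdd n (e x) = c₂) →
        (Fin.natAdd n (e y) = c₁ ∨ Fin.natAdd n (e y) = c₂) →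
        (Fin.natAdd n (e z) = c₁ ∨ Fin.natAdd n (e z) = c₂) → False := by
      intro x y z hxy hxz hyz hx hy hz
      have h1 : (e x : ℕ) ≠ (e y : ℕ) :=
        fun h => hxy (congrArg Sum.inr (e.injective (Fin.ext h)))
      have h2 : (e x : ℕ) ≠ (e z : ℕ) :=
        fun h => hxz (congrArg Sum.inr (e.injective (Fin.ext h)))
      have h3 : (e y : ℕ) ≠ (e z : ℕ) :=
        fun h => hyz (congrArg Sum.inr (e.injective (Fin.ext h)))
      simp only [Fin.ext_iff, Fin.coe_natAdd] at hx hy hz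
      omega
    have key3 : ∀ (p q : V₁) (w : V₂), G₁.Adj p q →
        (Fin.castAdd m (φ p) = c₁ ∨ Fin.castAdd m (φ p) = c₂) →
        (Fin.castAdd m (φ q) = c₁ ∨ Fin.castAdd m (φ q) = c₂) →
        (Fin.natAdd n (e w) = c₁ ∨ Fin.natAdd n (e w) = c₂) → False := by
      intro p q w hpq hp hq hw
      have hne : ((φ p : ℕ)) ≠ (φ q : ℕ) := fun h => hφ.1 hpq (Fin.ext h)
      have hlp := (φ p).isLt
      have hlq := (φ q).isLt
      simp only [Fin.ext_iff, Fin.coe_castAdd, Fin.coe_natAdd] at hp hq hw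
      omega
    have key0 : ∀ p q r s : V₁, (Sum.inl p : V₁ ⊕ V₂) ≠ Sum.inl q →
        (Sum.inl p : V₁ ⊕ V₂) ≠ Sum.inl r → (Sum.inl p : V₁ ⊕ V₂) ≠ Sum.inl s →
        (Sum.inl q : V₁ ⊕ V₂) ≠ Sum.inl r → (Sum.inl q : V₁ ⊕ V₂) ≠ Sum.inl s →
        (Sum.inl r : V₁ ⊕ V₂) ≠ Sum.inl s →
        G₁.Adj p q → G₁.Adj q r → G₁.Adj r s →
        (Fin.castAdd m (φ p) = c₁ ∨ Fin.castAdd m (φ p) = c₂) →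
        (Fin.castAdd m (φ q) = c₁ ∨ Fin.castAdd m (φ q) = c₂) →
        (Fin.castAdd m (φ r) = c₁ ∨ Fin.castAdd m (φ r) = c₂) →
        (Fin.castAdd m (φ s) = c₁ ∨ Fin.castAdd m (φ s) = c₂) → False := by
      intro p q r s hpq hpr hps hqr hqs hrs a1 a2 a3 hp hq hr hs
      have hpq' : p ≠ q := fun h => hpq (congrArg Sum.inl h)
      have hpr' : p ≠ r := fun h => hpr (congrArg Sum.inl h)
      have hps' : p ≠ s := fun h => hps (congrArg Sum.inl h)
      have hqr' : q ≠ r := fun h => hqr (congrArg Sum.inl h)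
      have hqs' : q ≠ s := fun h => hqs (congrArg Sum.inl h)
      have hrs' : r ≠ s := fun h => hrs (congrArg Sum.inl h)
      have hpqv : φ p ≠ φ q := hφ.1 a1
      have cinj : Function.Injective (Fin.castAdd m : Fin n → Fin (n + m)) :=
        fun x y h => Fin.ext (by simpa using congrArg Fin.val h)
      have cov : ∀ t : V₁,
          (Fin.castAdd m (φ t) = c₁ ∨ Fin.castAdd m (φ t) = c₂) →
          φ t = φ p ∨ φ t = φ q := by
        intro t ht
        rcases mem_pair_of (fun h => hpqv (cinj h)) hp hq ht with h | h
        · exact Or.inl (cinj h)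
        · exact Or.inr (cinj h)
      refine hφ.2 (φ p) (φ q) ⟨⟨p, cov p hp⟩, ⟨q, cov q hq⟩, ⟨r, cov r hr⟩, ⟨s, cov s hs⟩,
        ?_, ?_, ?_, ?_, ?_, ?_, a1, a2, a3⟩
      · exact fun h => hpq' (Subtype.mk_eq_mk.mp h)
      · exact fun h => hpr' (Subtype.mk_eq_mk.mp h)
      · exact fun h => hps' (Subtype.mk_eq_mk.mp h)
      · exact fun h => hqr' (Subtype.mk_eq_mk.mp h)
      · exact fun h => hqs' (Subtype.mk_eq_mk.mp h)
      · exact fun h => hrs' (Subtype.mk_eq_mk.mp h)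
    rcases a with a | a <;> rcases b with b | b <;> rcases c with c | c <;> rcases d with d | d
    · exact key0 a b c d hab' hac' had' hbc' hbd' hcd' h1 h2 h3 ha hb hc hd
    · exact key3 a b d h1 ha hb hd
    · exact key3 a b c h1 ha hb hc
    · exact key1 c d hcd' hc hd a ha
    · exact key3 c d b h3 hc hd hb
    · exact key1 b d hbd' hb hd a ha
    · exact key1 b c hbc' hb hc a ha
    · exact key2 b c d hbc' hbd' hcd' hb hc hd
    · exact key3 b c a h2 hb hc ha
    · exact key1 a d had' ha hd b hb
    · exact key1 a c hac' ha hc b hb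
    · exact key2 a c d hac' had' hcd' ha hc hd
    · exact key1 a b hab' ha hb c hc
    · exact key2 a b d hab' had' hbd' ha hb hd
    · exact key2 a b c hab' hac' hbc' ha hb hc
    · exact key2 a b c hab' hac' hbc' ha hb hc

end Aux2
section Aux3

variable {V V₁ V₂ : Type*}

lemma isStarColoring_isEmpty {α' : Type*} [IsEmpty V] (G : SimpleGraph V) (φ : V → α') :
    IsStarColoring G φ := by
  refine ⟨fun u => isEmptyElim u, ?_⟩
  rintro c₁ c₂ ⟨a, -⟩
  exact isEmptyElim a.1

lemma exists_opt_starColoring [Fintype V] (G : SimpleGraph V) :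
    ∃ φ : V → Fin (starChromaticNumber G), IsStarColoring G φ := by
  have h : {n : ℕ | ∃ φ : V → Fin n, IsStarColoring G φ}.Nonempty :=
    ⟨Fintype.card V, ⇑(Fintype.equivFin V),
      injective_isStarColoring (Fintype.equivFin V).injective⟩
  exact Nat.sInf_mem h

lemma join_dichotomy (G₁ : SimpleGraph V₁) (G₂ : SimpleGraph V₂) {n : ℕ}
    (Φ : V₁ ⊕ V₂ → Fin n) (hΦ : IsStarColoring (G₁.join G₂) Φ) :
    Function.Injective (Φ ∘ Sum.inl) ∨ Function.Injective (Φ ∘ Sum.inr) := by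
  by_contra h
  push_neg at h
  obtain ⟨h1, h2⟩ := h
  obtain ⟨u, u', hequ, hneu⟩ := Function.not_injective_iff.mp h1
  obtain ⟨v, v', heqv, hnev⟩ := Function.not_injective_iff.mp h2
  set c₁ := Φ (Sum.inl u) with hc₁
  set c₂ := Φ (Sum.inr v) with hc₂
  have hadj : (G₁.join G₂).Adj (Sum.inl u) (Sum.inr v) := trivial
  refine hΦ.2 c₁ c₂ ⟨⟨Sum.inl u, Or.inl rfl⟩, ⟨Sum.inr v, Or.inr rfl⟩,
    ⟨Sum.inl u', Or.inl hequ.symm⟩, ⟨Sum.inr v', Or.inr heqv.symm⟩,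
    ?_, ?_, ?_, ?_, ?_, ?_, trivial, trivial, trivial⟩
  · exact fun h => Sum.inl_ne_inr (Subtype.mk_eq_mk.mp h)
  · exact fun h => hneu (Sum.inl_injective (Subtype.mk_eq_mk.mp h))
  · exact fun h => Sum.inl_ne_inr (Subtype.mk_eq_mk.mp h)
  · exact fun h => Sum.inr_ne_inl (Subtype.mk_eq_mk.mp h)
  · exact fun h => hnev (Sum.inr_injective (Subtype.mk_eq_mk.mp h))
  · exact fun h => Sum.inl_ne_inr (Subtype.mk_eq_mk.mp h)

lemma join_lower_aux [Fintype V₁] [Fintype V₂] (G₁ : SimpleGraph V₁) (G₂ : SimpleGraph V₂)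
    {n : ℕ} (Φ : V₁ ⊕ V₂ → Fin n) (hΦ : IsStarColoring (G₁.join G₂) Φ)
    (hinj : Function.Injective (Φ ∘ Sum.inr)) :
    starChromaticNumber G₁ + Fintype.card V₂ ≤ n := by
  classical
  have hcard2 : Fintype.card V₂ ≤ n := by
    simpa using Fintype.card_le_of_injective _ hinj
  have hsinf : starChromaticNumber G₁ ≤ n - Fintype.card V₂ := by
    have hψ : IsStarColoring G₁ (Φ ∘ Sum.inl) :=
      isStarColoring_comp_right Sum.inl_injective (fun u v h => h) hΦ
    set ψ := Φ ∘ Sum.inl with hψdef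
    set T : Finset (Fin n) := (Finset.univ.image (Φ ∘ Sum.inr))ᶜ with hT
    have hTcard : T.card = n - Fintype.card V₂ := by
      rw [hT, Finset.card_compl, Finset.card_image_of_injective _ hinj,
        Finset.card_univ, Fintype.card_fin]
    have hmem : ∀ v : V₁, ψ v ∈ T := by
      intro v
      rw [hT, Finset.mem_compl]
      intro hc
      obtain ⟨w, -, hw⟩ := Finset.mem_image.1 hc
      exact hΦ.1 (show (G₁.join G₂).Adj (Sum.inl v) (Sum.inr w) from trivial) hw.symm
    rcases isEmpty_or_nonempty V₁ with hV | hV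
    · exact Nat.sInf_le ⟨fun v => isEmptyElim v, isStarColoring_isEmpty G₁ _⟩
    · obtain ⟨v₀⟩ := hV
      have hpos : 0 < n - Fintype.card V₂ := by
        rw [← hTcard]
        exact Finset.card_pos.2 ⟨ψ v₀, hmem v₀⟩
      set g : Fin n → Fin (n - Fintype.card V₂) := fun x =>
        if hx : x ∈ T then Finset.equivFinOfCardEq hTcard ⟨x, hx⟩ else ⟨0, hpos⟩ with hg
      have hginj : Set.InjOn g (Set.range ψ) := by
        rintro x ⟨u, rfl⟩ y ⟨v, rfl⟩ hxy
        have hx := hmem u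
        have hy := hmem v
        rw [hg] at hxy
        simp only [dif_pos hx, dif_pos hy] at hxy
        exact Subtype.mk_eq_mk.mp ((Finset.equivFinOfCardEq hTcard).injective hxy)
      exact Nat.sInf_le ⟨g ∘ ψ, isStarColoring_comp_left hψ hginj⟩
  omega

lemma swap_starColoring {G₁ : SimpleGraph V₁} {G₂ : SimpleGraph V₂} {α' : Type*}
    {Φ : V₂ ⊕ V₁ → α'} (hΦ : IsStarColoring (G₂.join G₁) Φ) :
    IsStarColoring (G₁.join G₂) (Φ ∘ Sum.swap) := by
  refine isStarColoring_comp_right (Function.LeftInverse.injective Sum.swap_leftInverse)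
    ?_ hΦ
  rintro (u | u) (v | v) h <;> exact h

end Aux3
/-- The star chromatic number of a join:
`χₛ(G₁ ⋈ G₂) = min (χₛ(G₁) + |V₂|) (χₛ(G₂) + |V₁|)`. -/
theorem starChromaticNumber_join {V₁ V₂ : Type*} [Fintype V₁] [Fintype V₂]
    (G₁ : SimpleGraph V₁) (G₂ : SimpleGraph V₂) :
    starChromaticNumber (G₁.join G₂) =
      min (starChromaticNumber G₁ + Fintype.card V₂)
        (starChromaticNumber G₂ + Fintype.card V₁) := by
  apply le_antisymm
  · apply le_min
    · obtain ⟨φ, hφ⟩ := exists_opt_starColoring G₁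
      obtain ⟨Φ, hΦ⟩ := join_upper G₁ G₂ φ hφ
      exact Nat.sInf_le ⟨Φ, hΦ⟩
    · obtain ⟨φ, hφ⟩ := exists_opt_starColoring G₂
      obtain ⟨Φ, hΦ⟩ := join_upper G₂ G₁ φ hφ
      exact Nat.sInf_le ⟨Φ ∘ Sum.swap, swap_starColoring hΦ⟩
  · have hne : {m : ℕ | ∃ Φ : V₁ ⊕ V₂ → Fin m, IsStarColoring (G₁.join G₂) Φ}.Nonempty :=
      ⟨Fintype.card (V₁ ⊕ V₂), ⇑(Fintype.equivFin (V₁ ⊕ V₂)),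
        injective_isStarColoring (Fintype.equivFin (V₁ ⊕ V₂)).injective⟩
    obtain ⟨Φ, hΦ⟩ : ∃ Φ : V₁ ⊕ V₂ → Fin (starChromaticNumber (G₁.join G₂)),
        IsStarColoring (G₁.join G₂) Φ := Nat.sInf_mem hne
    rcases join_dichotomy G₁ G₂ Φ hΦ with h | h
    · refine le_trans (min_le_right _ _) ?_
      exact join_lower_aux G₂ G₁ (Φ ∘ Sum.swap) (swap_starColoring hΦ) h
    · exact le_trans (min_le_left _ _) (join_lower_aux G₁ G₂ Φ hΦ h)
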